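/- Let M be a loopless oriented matroid of rank 3 on E = {1,…,n} with chirotope χ, and let σ be a rotational symmetry of M of finite order a such that some element x satisfies χ(p, x, σ(x)) ≠ 0 for the element p below (i.e., σ is non-trivial: some x is not parallel to σ(x)). If σ(p) = p and σ(q) = q, then p and q are parallel or antiparallel, i.e., χ(p, q, x) = 0 for all x ∈ E. -/

import Mathlib

/-- Chirotope axioms (B1)-(B3) for a map `χ : E^r → {−1,0,1}` (values in ℤ). -/
def IsChirotope {E : Type*} {r : ℕ} (χ : (Fin r → E) → ℤ) : Prop :=
  (∀ t, χ t = 1 ∨ χ t = 0 ∨ χ t = -1) ∧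
  (∃ t, χ t ≠ 0) ∧
  (∀ (t : Fin r → E) (τ : Equiv.Perm (Fin r)), χ (t ∘ ⇑τ) = ((Equiv.Perm.sign τ : ℤˣ) : ℤ) * χ t) ∧
  (∀ (i₀ : Fin r) (x y : Fin r → E),
    (∀ s : Fin r, 0 ≤ χ (Function.update x i₀ (y s)) * χ (Function.update y s (x i₀))) →
    0 ≤ χ x * χ y)

/-- Cocircuits of the oriented matroid with chirotope `χ`: the nonzero sign vectors of the
form `x ↦ χ(t₁,…,x,…,t_r)`. -/
def IsCocircuit {E : Type*} {r : ℕ} (χ : (Fin r → E) → ℤ) (c : E → ℤ) : Prop :=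
  c ≠ 0 ∧ ∃ (i : Fin r) (t : Fin r → E), c = fun x => χ (Function.update t i x)

/-- Circuits of the oriented matroid with chirotope `χ`. -/
def IsCircuit {E : Type*} {r : ℕ} (χ : (Fin r → E) → ℤ) (c : E → ℤ) : Prop :=
  c ≠ 0 ∧ ∃ t : Fin (r + 1) → E,
    (∀ i, c (t i) = (-1) ^ (i : ℕ) * χ (fun j => t (i.succAbove j))) ∧
    (∀ x, (∀ i, t i ≠ x) → c x = 0)

/-- Closure of a set of sign vectors under composition `X ∘ Y`. -/
inductive SignComp {E : Type*} (B : (E → ℤ) → Prop) : (E → ℤ) → Prop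
  | zero : SignComp B 0
  | base (c : E → ℤ) : B c → SignComp B c
  | comp (X Y : E → ℤ) : SignComp B X → SignComp B Y →
      SignComp B (fun e => if X e = 0 then Y e else X e)

/-- Covectors: compositions of cocircuits. -/
def IsCovector {E : Type*} {r : ℕ} (χ : (Fin r → E) → ℤ) : (E → ℤ) → Prop :=
  SignComp (IsCocircuit χ)

/-- Vectors: compositions of circuits. -/
def IsVector {E : Type*} {r : ℕ} (χ : (Fin r → E) → ℤ) : (E → ℤ) → Prop :=
  SignComp (IsCircuit χ)

/-- No loops: every element lies in some basis. -/
def OMLoopless {E : Type*} {r : ℕ} (χ : (Fin r → E) → ℤ) : Prop :=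
  ∀ e : E, ∃ t, χ t ≠ 0 ∧ ∃ i, t i = e

/-- Simplicity: no loops and no two distinct parallel or antiparallel elements. -/
def OMSimple {E : Type*} {r : ℕ} (χ : (Fin r → E) → ℤ) : Prop :=
  OMLoopless χ ∧ ∀ e f : E, e ≠ f → ∃ t, χ t ≠ 0 ∧ ∃ i j, i ≠ j ∧ t i = e ∧ t j = f

/-- Acyclicity: existence of the all-positive covector. -/
def OMAcyclic {E : Type*} {r : ℕ} (χ : (Fin r → E) → ℤ) : Prop :=
  ∃ X, IsCovector χ X ∧ ∀ e, X e = 1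

/-- Extreme point of an acyclic oriented matroid. -/
def IsExtremePoint {E : Type*} {r : ℕ} (χ : (Fin r → E) → ℤ) (e : E) : Prop :=
  ∃ c, IsCocircuit χ c ∧ c e = 0 ∧ ∀ f, f ≠ e → c f = 1

/-- Rotational symmetry of the oriented matroid with chirotope `χ`. -/
def IsRotSym {E : Type*} {r : ℕ} (χ : (Fin r → E) → ℤ) (σ : Equiv.Perm E) : Prop :=
  ∀ t, χ (⇑σ ∘ t) = χ t

section Aux

variable {E : Type*} {χ : (Fin 3 → E) → ℤ}

private lemma comp3 (σ : Equiv.Perm E) (a b c : E) :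
    ⇑σ ∘ ![a,b,c] = ![σ a, σ b, σ c] := by
  funext i; fin_cases i <;> rfl

private lemma upd0 (a b c v : E) : Function.update ![a,b,c] (0:Fin 3) v = ![v,b,c] := by
  funext i; fin_cases i <;> simp [Function.update]

private lemma upd1 (a b c v : E) : Function.update ![a,b,c] (1:Fin 3) v = ![a,v,c] := by
  funext i; fin_cases i <;> simp [Function.update]

private lemma upd2 (a b c v : E) : Function.update ![a,b,c] (2:Fin 3) v = ![a,b,v] := by
  funext i; fin_cases i <;> simp [Function.update]

variable (halt : ∀ (t : Fin 3 → E) (τ : Equiv.Perm (Fin 3)),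
    χ (t ∘ ⇑τ) = ((Equiv.Perm.sign τ : ℤˣ) : ℤ) * χ t)

include halt in
private lemma sw12 (a b c : E) : χ ![a,c,b] = - χ ![a,b,c] := by
  have h := halt ![a,b,c] (Equiv.swap 1 2)
  have ht : ![a,b,c] ∘ ⇑(Equiv.swap (1:Fin 3) 2) = ![a,c,b] := by
    funext i; fin_cases i <;> simp [Equiv.swap_apply_def]
  have hs : ((Equiv.Perm.sign (Equiv.swap (1:Fin 3) 2) : ℤˣ) : ℤ) = -1 := by decide
  rw [ht, hs] at h; linarith

include halt in
private lemma rep01 (a b : E) : χ ![a,a,b] = 0 := by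
  have h := halt ![a,a,b] (Equiv.swap 0 1)
  have ht : ![a,a,b] ∘ ⇑(Equiv.swap (0:Fin 3) 1) = ![a,a,b] := by
    funext i; fin_cases i <;> simp [Equiv.swap_apply_def]
  have hs : ((Equiv.Perm.sign (Equiv.swap (0:Fin 3) 1) : ℤˣ) : ℤ) = -1 := by decide
  rw [ht, hs] at h; linarith

include halt in
private lemma rep02 (a b : E) : χ ![a,b,a] = 0 := by
  have h := halt ![a,b,a] (Equiv.swap 0 2)
  have ht : ![a,b,a] ∘ ⇑(Equiv.swap (0:Fin 3) 2) = ![a,b,a] := by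
    funext i; fin_cases i <;> simp [Equiv.swap_apply_def]
  have hs : ((Equiv.Perm.sign (Equiv.swap (0:Fin 3) 2) : ℤˣ) : ℤ) = -1 := by decide
  rw [ht, hs] at h; linarith

include halt in
private lemma rep12 (a b : E) : χ ![a,b,b] = 0 := by
  have h := sw12 halt a b b; linarith

variable (hB3 : ∀ (i₀ : Fin 3) (x y : Fin 3 → E),
    (∀ s : Fin 3, 0 ≤ χ (Function.update x i₀ (y s)) * χ (Function.update y s (x i₀))) →
    0 ≤ χ x * χ y)

include halt hB3 in
private lemma gp3 (a b c d e : E)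
    (h3 : 0 ≤ χ ![a,b,e] * χ ![a,c,d]) (h2 : χ ![a,b,d] * χ ![a,c,e] ≤ 0) :
    χ ![a,b,c] * χ ![a,d,e] ≤ 0 := by
  have key := hB3 2 ![a,c,b] ![a,d,e] ?_
  · have hsw := sw12 halt a b c
    rw [hsw] at key; linarith
  · intro s; fin_cases s
    · show 0 ≤ χ (Function.update ![a,c,b] 2 (![a,d,e] 0)) * χ (Function.update ![a,d,e] 0 (![a,c,b] 2))
      have : (![a,d,e] : Fin 3 → E) 0 = a := rfl
      rw [this, upd2, rep02 halt a c]
      simp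
    · show 0 ≤ χ (Function.update ![a,c,b] 2 (![a,d,e] 1)) * χ (Function.update ![a,d,e] 1 (![a,c,b] 2))
      have h1 : (![a,d,e] : Fin 3 → E) 1 = d := rfl
      have h2' : (![a,c,b] : Fin 3 → E) 2 = b := rfl
      rw [h1, h2', upd2, upd1]
      linarith [mul_comm (χ ![a,b,e]) (χ ![a,c,d])]
    · show 0 ≤ χ (Function.update ![a,c,b] 2 (![a,d,e] 2)) * χ (Function.update ![a,d,e] 2 (![a,c,b] 2))
      have h1 : (![a,d,e] : Fin 3 → E) 2 = e := rfl
      have h2' : (![a,c,b] : Fin 3 → E) 2 = b := rfl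
      rw [h1, h2', upd2, upd2, sw12 halt a b d]
      linarith [mul_comm (χ ![a,b,d]) (χ ![a,c,e])]

end Aux
section Aux2

variable {E : Type*} {χ : (Fin 3 → E) → ℤ}
variable (halt : ∀ (t : Fin 3 → E) (τ : Equiv.Perm (Fin 3)),
    χ (t ∘ ⇑τ) = ((Equiv.Perm.sign τ : ℤˣ) : ℤ) * χ t)
variable (hB3 : ∀ (i₀ : Fin 3) (x y : Fin 3 → E),
    (∀ s : Fin 3, 0 ≤ χ (Function.update x i₀ (y s)) * χ (Function.update y s (x i₀))) →
    0 ≤ χ x * χ y)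

include halt hB3 in
private lemma keyzero (p q x y z : E)
    (h1 : χ ![p,q,x] = 0) (h2 : χ ![p,q,y] = 0) :
    χ ![p,x,y] * χ ![p,q,z] = 0 := by
  have A1 := hB3 1 ![p,x,y] ![p,q,z] ?_
  · have A2 := hB3 1 ![p,y,x] ![p,q,z] ?_
    · rw [sw12 halt p x y] at A2
      -- A2 : 0 ≤ -χ ![p,x,y] * χ ![p,q,z]
      nlinarith [A1, A2]
    · intro s; fin_cases s
      · show 0 ≤ χ (Function.update ![p,y,x] 1 (![p,q,z] 0)) * χ (Function.update ![p,q,z] 0 (![p,y,x] 1))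
        have e0 : (![p,q,z] : Fin 3 → E) 0 = p := rfl
        rw [e0, upd1, rep01 halt]; simp
      · show 0 ≤ χ (Function.update ![p,y,x] 1 (![p,q,z] 1)) * χ (Function.update ![p,q,z] 1 (![p,y,x] 1))
        have e0 : (![p,q,z] : Fin 3 → E) 1 = q := rfl
        rw [e0, upd1, h1]; simp
      · show 0 ≤ χ (Function.update ![p,y,x] 1 (![p,q,z] 2)) * χ (Function.update ![p,q,z] 2 (![p,y,x] 1))
        have e0 : (![p,q,z] : Fin 3 → E) 2 = z := rfl
        have e1 : (![p,y,x] : Fin 3 → E) 1 = y := rfl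
        rw [e0, e1, upd2, h2]; simp
  · intro s; fin_cases s
    · show 0 ≤ χ (Function.update ![p,x,y] 1 (![p,q,z] 0)) * χ (Function.update ![p,q,z] 0 (![p,x,y] 1))
      have e0 : (![p,q,z] : Fin 3 → E) 0 = p := rfl
      rw [e0, upd1, rep01 halt]; simp
    · show 0 ≤ χ (Function.update ![p,x,y] 1 (![p,q,z] 1)) * χ (Function.update ![p,q,z] 1 (![p,x,y] 1))
      have e0 : (![p,q,z] : Fin 3 → E) 1 = q := rfl
      rw [e0, upd1, h2]; simp
    · show 0 ≤ χ (Function.update ![p,x,y] 1 (![p,q,z] 2)) * χ (Function.update ![p,q,z] 2 (![p,x,y] 1))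
      have e0 : (![p,q,z] : Fin 3 → E) 2 = z := rfl
      have e1 : (![p,x,y] : Fin 3 → E) 1 = x := rfl
      rw [e0, e1, upd2, h1]; simp

include halt hB3 in
private lemma strict_trans (p q z w v : E) (u : ℤ)
    (hz : χ ![p,q,z] = u) (hw : χ ![p,q,w] = u) (hv : χ ![p,q,v] = u)
    (h1 : u * χ ![p,z,w] < 0) (h2 : u * χ ![p,w,v] < 0) :
    u * χ ![p,z,v] < 0 := by
  have hle : χ ![p,q,w] * χ ![p,z,v] ≤ 0 := by
    apply gp3 halt hB3 p q w z v
    · rw [hv, sw12 halt p z w]; nlinarith [h1]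
    · rw [hz]; linarith [h2]
  rw [hw] at hle
  rcases lt_or_eq_of_le hle with h | h
  · exact h
  · exfalso
    have hu : u ≠ 0 := by rintro rfl; simp at h1
    have hzv : χ ![p,z,v] = 0 := by
      rcases mul_eq_zero.mp h with h' | h'
      · exact absurd h' hu
      · exact h'
    have hc := gp3 halt hB3 p z w v q ?_ ?_
    · have e1 : χ ![p,v,q] = -u := by rw [sw12 halt p q v, hv]
      rw [e1] at hc
      nlinarith [h1, hc]
    · have e1 : χ ![p,z,q] = -u := by rw [sw12 halt p q z, hz]
      rw [e1]; nlinarith [h2]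
    · rw [hzv]; simp

end Aux2
section Core

variable {E : Type*} {χ : (Fin 3 → E) → ℤ}

private lemma core (halt : ∀ (t : Fin 3 → E) (τ : Equiv.Perm (Fin 3)),
      χ (t ∘ ⇑τ) = ((Equiv.Perm.sign τ : ℤˣ) : ℤ) * χ t)
    (hB3 : ∀ (i₀ : Fin 3) (x y : Fin 3 → E),
      (∀ s : Fin 3, 0 ≤ χ (Function.update x i₀ (y s)) * χ (Function.update y s (x i₀))) →
      0 ≤ χ x * χ y)
    (σ : Equiv.Perm E) (hrot : IsRotSym χ σ)
    (a : ℕ) (ha : 0 < a) (hσa : σ ^ a = 1)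
    (p q x : E) (hp : σ p = p) (hq : σ q = q)
    (hneg : χ ![p,q,x] * χ ![p,x,σ x] < 0) : False := by
  set u := χ ![p,q,x] with hu
  -- invariance facts
  have inv1 : ∀ z : E, χ ![p,q,σ z] = χ ![p,q,z] := by
    intro z
    have h := hrot ![p,q,z]
    rwa [comp3, hp, hq] at h
  have inv2 : ∀ z w : E, χ ![p, σ z, σ w] = χ ![p,z,w] := by
    intro z w
    have h := hrot ![p,z,w]
    rwa [comp3, hp] at h
  have pow_apply : ∀ (n : ℕ) (z : E), (σ ^ (n+1)) z = σ ((σ ^ n) z) := by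
    intro n z
    rw [pow_succ']
    rfl
  have claim1 : ∀ n : ℕ, χ ![p,q,(σ ^ n) x] = u := by
    intro n; induction n with
    | zero => simp [hu]
    | succ n ih => rw [pow_apply, inv1, ih]
  have claim2 : ∀ n : ℕ, χ ![p, (σ ^ n) x, (σ ^ (n+1)) x] = χ ![p, x, σ x] := by
    intro n; induction n with
    | zero => simp
    | succ n ih => rw [pow_apply n x, pow_apply (n+1) x, inv2, ih]
  have key : ∀ n : ℕ, u * χ ![p, x, (σ ^ (n+1)) x] < 0 := by
    intro n; induction n with
    | zero => simpa using hneg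
    | succ n ih =>
        exact strict_trans halt hB3 p q x ((σ ^ (n+1)) x) ((σ ^ (n+2)) x) u
          rfl (claim1 (n+1)) (claim1 (n+2)) ih
          (by rw [claim2 (n+1)]; exact (by simpa using hneg))
  have hfin := key (a - 1)
  have hax : (σ ^ (a - 1 + 1)) x = x := by
    have : a - 1 + 1 = a := Nat.succ_pred_eq_of_pos ha
    rw [this, hσa]; rfl
  rw [hax, rep12 halt] at hfin
  simp at hfin

end Core

/-- Uniqueness of fixed points for non-trivial rotational symmetries of loopless rank-3
oriented matroids: if `σ` is a rotational symmetry of finite order `a` which is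
non-trivial (some `x` satisfies `χ(p,x,σx) ≠ 0`) and `σ` fixes `p` and `q`, then `p`
and `q` are parallel or antiparallel, i.e. `χ(p,q,x) = 0` for all `x`. -/
theorem fixed_points_of_nontrivial_rank3_rotation_parallel
    {E : Type*} (χ : (Fin 3 → E) → ℤ) (hχ : IsChirotope χ)
    (hloopless : ∀ e : E, ∃ x y : E, χ ![e, x, y] ≠ 0)
    (σ : Equiv.Perm E) (hrot : IsRotSym χ σ)
    (a : ℕ) (ha : 0 < a) (hσa : σ ^ a = 1)
    (p q : E) (hp : σ p = p) (hq : σ q = q)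
    (hnontriv : ∃ x : E, χ ![p, x, σ x] ≠ 0) :
    ∀ x : E, χ ![p, q, x] = 0 := by
  obtain ⟨hval, hne, halt, hB3⟩ := hχ
  obtain ⟨x, hx⟩ := hnontriv
  -- step 1 : χ ![p,q,x] = 0
  have hux : χ ![p,q,x] = 0 := by
    rcases lt_trichotomy (χ ![p,q,x] * χ ![p,x,σ x]) 0 with h | h | h
    · exact absurd (core halt hB3 σ hrot a ha hσa p q x hp hq h) (fun h => h)
    · rcases mul_eq_zero.mp h with h' | h'
      · exact h'
      · exact absurd h' hx
    · exfalso
      -- use σ⁻¹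
      have hrot' : IsRotSym χ σ⁻¹ := by
        intro t
        have h' := hrot (⇑σ⁻¹ ∘ t)
        have : ⇑σ ∘ ⇑σ⁻¹ ∘ t = t := by funext i; simp
        rw [this] at h'
        exact h'.symm
      have hσa' : σ⁻¹ ^ a = 1 := by rw [inv_pow, hσa, inv_one]
      have hp' : σ⁻¹ p = p := by conv_lhs => rw [← hp]; rw [← Equiv.Perm.mul_apply, inv_mul_cancel, Equiv.Perm.one_apply]
      have hq' : σ⁻¹ q = q := by conv_lhs => rw [← hq]; rw [← Equiv.Perm.mul_apply, inv_mul_cancel, Equiv.Perm.one_apply]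
      have hflip : χ ![p, x, σ⁻¹ x] = - χ ![p, x, σ x] := by
        have h1 := hrot ![p, σ⁻¹ x, x]
        rw [comp3, hp, ← Equiv.Perm.mul_apply, mul_inv_cancel, Equiv.Perm.one_apply] at h1
        rw [sw12 halt p (σ⁻¹ x) x, ← h1]
      have : χ ![p,q,x] * χ ![p,x,σ⁻¹ x] < 0 := by rw [hflip]; nlinarith [h]
      exact core halt hB3 σ⁻¹ hrot' a ha hσa' p q x hp' hq' this
  -- step 2 : χ ![p,q,σ x] = 0
  have hux' : χ ![p,q,σ x] = 0 := by
    have h := hrot ![p,q,x]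
    rw [comp3, hp, hq] at h
    rw [h, hux]
  -- step 3 : conclude
  intro z
  have h := keyzero halt hB3 p q x (σ x) z hux hux'
  rcases mul_eq_zero.mp h with h' | h'
  · exact absurd h' hx
  · exact h'
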